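/- Let (μ_n)_{n∈ℕ} be a sequence of Borel probability measures on ℝ with finite first moments, let ε > 0 and p ∈ (0,1]. Then for every m ∈ ℝ there exists a peacock (ν_n)_{n∈ℕ} with mean m (i.e., Eν_n = m for all n) such that d_p^P(μ_n, ν_n) ≤ ε for all n ∈ ℕ. In particular (taking p = ε ∈ (0,1]), for every m ∈ ℝ there exists a peacock (ν_n)_{n∈ℕ} with mean m such that d^P(μ_n, ν_n) ≤ ε for all n ∈ ℕ. -/

import Mathlib

open MeasureTheory Filter Set
open scoped ENNReal

/-- Call function `R_μ(x) = ∫ (y−x)⁺ μ(dy)`. -/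
noncomputable def callFn (μ : Measure ℝ) (x : ℝ) : ℝ := ∫ y, max (y - x) 0 ∂μ

/-- Mean `Eμ = ∫ y μ(dy)`. -/
noncomputable def meanM (μ : Measure ℝ) : ℝ := ∫ y, y ∂μ

/-- Distribution function `F_μ(x) = μ((−∞,x])`. -/
noncomputable def cdfM (μ : Measure ℝ) (x : ℝ) : ℝ := (μ (Set.Iic x)).toReal

/-- Membership in `M`: Borel probability measure on ℝ with finite first moment. -/
def MemM (μ : Measure ℝ) : Prop :=
  IsProbabilityMeasure μ ∧ Integrable (fun y => y) μ

/-- Convex order `μ ≤_c ν`. -/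
def ConvexOrder (μ ν : Measure ℝ) : Prop :=
  ∀ φ : ℝ → ℝ, ConvexOn ℝ Set.univ φ → Integrable φ μ → Integrable φ ν →
    ∫ y, φ y ∂μ ≤ ∫ y, φ y ∂ν

/-- Infinity Wasserstein distance via distribution functions, valued in `[0,∞]`,
with `inf ∅ = ∞`. -/
noncomputable def Winf (μ ν : Measure ℝ) : ℝ≥0∞ :=
  sInf (ENNReal.ofReal '' {ε : ℝ | 0 < ε ∧ ∀ x : ℝ,
    cdfM μ (x - ε) ≤ cdfM ν x ∧ cdfM ν x ≤ cdfM μ (x + ε)})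

/-- Membership in the closed ball `B^∞(μ,ε)` (within `M`). -/
def InBallWinf (μ : Measure ℝ) (ε : ℝ) (ν : Measure ℝ) : Prop :=
  MemM ν ∧ Winf μ ν ≤ ENNReal.ofReal ε

/-- `conv2 f g`: the largest convex function majorized by `min f g`, pointwise. -/
noncomputable def conv2 (f g : ℝ → ℝ) (x : ℝ) : ℝ :=
  sSup {z : ℝ | ∃ h : ℝ → ℝ, ConvexOn ℝ Set.univ h ∧ (∀ y, h y ≤ min (f y) (g y)) ∧ z = h x}

/-- `R^min_μ(x; m, ε)`. -/
noncomputable def RminW (μ : Measure ℝ) (m ε x : ℝ) : ℝ :=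
  max (m + callFn μ (x - ε) - (meanM μ + ε)) (callFn μ (x + ε))

/-- `R^max_μ(x; m, ε)`. -/
noncomputable def RmaxW (μ : Measure ℝ) (m ε x : ℝ) : ℝ :=
  conv2 (fun y => m + callFn μ (y + ε) - (meanM μ - ε)) (fun y => callFn μ (y - ε)) x

/-- Right derivative. -/
noncomputable def rderiv (f : ℝ → ℝ) (x : ℝ) : ℝ := derivWithin f (Set.Ioi x) x

/-- `R` is a call function: convex, nonincreasing, tending to `0` at `+∞`, and
`R(x)+x` has a finite limit at `−∞`. -/
def IsCallFn (R : ℝ → ℝ) : Prop :=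
  ConvexOn ℝ Set.univ R ∧ Antitone R ∧
    Tendsto R atTop (nhds 0) ∧ ∃ c : ℝ, Tendsto (fun x => R x + x) atBot (nhds c)

/-- Stop-loss distance, valued in `[0,∞]`. -/
noncomputable def dSL (μ ν : Measure ℝ) : ℝ≥0∞ :=
  ⨆ x : ℝ, ENNReal.ofReal |callFn μ x - callFn ν x|

/-- Lévy distance. -/
noncomputable def dLevy (μ ν : Measure ℝ) : ℝ≥0∞ :=
  sInf (ENNReal.ofReal '' {h : ℝ | 0 < h ∧ ∀ x : ℝ,
    cdfM μ (x - h) - h ≤ cdfM ν x ∧ cdfM ν x ≤ cdfM μ (x + h) + h})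

/-- Prokhorov distance on ℝ. -/
noncomputable def dProk (μ ν : Measure ℝ) : ℝ≥0∞ :=
  sInf (ENNReal.ofReal '' {h : ℝ | 0 < h ∧ ∀ A : Set ℝ, IsClosed A →
    ν A ≤ μ (Metric.cthickening h A) + ENNReal.ofReal h})

/-- Modified Lévy distance with parameter `p`. -/
noncomputable def dLevyMod (p : ℝ) (μ ν : Measure ℝ) : ℝ≥0∞ :=
  sInf (ENNReal.ofReal '' {h : ℝ | 0 < h ∧ ∀ x : ℝ,
    cdfM μ (x - h) - p ≤ cdfM ν x ∧ cdfM ν x ≤ cdfM μ (x + h) + p})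

/-- Modified Prokhorov distance with parameter `p`. -/
noncomputable def dProkMod (p : ℝ) (μ ν : Measure ℝ) : ℝ≥0∞ :=
  sInf (ENNReal.ofReal '' {h : ℝ | 0 < h ∧ ∀ A : Set ℝ, IsClosed A →
    ν A ≤ μ (Metric.cthickening h A) + ENNReal.ofReal p})
lemma exists_subgradient {φ : ℝ → ℝ} (hφ : ConvexOn ℝ Set.univ φ) (x : ℝ) :
    ∃ s : ℝ, ∀ y, φ x + s * (y - x) ≤ φ y := by
  set S : Set ℝ := (fun y => (φ y - φ x) / (y - x)) '' Set.Ioi x with hS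
  have hne : S.Nonempty := ⟨_, ⟨x + 1, by simp, rfl⟩⟩
  have hbdd : BddBelow S := by
    refine ⟨(φ x - φ (x - 1)) / (x - (x - 1)), ?_⟩
    rintro _ ⟨y, hy, rfl⟩
    exact hφ.slope_mono_adjacent (Set.mem_univ _) (Set.mem_univ _) (by linarith) hy
  refine ⟨sInf S, fun y => ?_⟩
  rcases lt_trichotomy y x with h | h | h
  · have hle : (φ x - φ y) / (x - y) ≤ sInf S := by
      refine le_csInf hne ?_
      rintro _ ⟨z, hz, rfl⟩
      exact hφ.slope_mono_adjacent (Set.mem_univ _) (Set.mem_univ _) h hz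
    have h2 := (div_le_iff₀ (by linarith : (0:ℝ) < x - y)).mp hle
    nlinarith [mul_le_mul_of_nonneg_right hle (by linarith : (0:ℝ) ≤ x - y)]
  · simp [h]
  · have hle : sInf S ≤ (φ y - φ x) / (y - x) := csInf_le hbdd ⟨y, h, rfl⟩
    have h2 := mul_le_mul_of_nonneg_right hle (by linarith : (0:ℝ) ≤ y - x)
    rw [div_mul_cancel₀] at h2
    · linarith
    · linarith

lemma convex_continuous {φ : ℝ → ℝ} (hφ : ConvexOn ℝ Set.univ φ) : Continuous φ := by
  rw [← continuousOn_univ]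
  exact hφ.continuousOn isOpen_univ

lemma integrable_dirac_fn {f : ℝ → ℝ} (a : ℝ) : Integrable f (MeasureTheory.Measure.dirac a) := by
  have h : Integrable (fun _ : ℝ => f a) (MeasureTheory.Measure.dirac a) := integrable_const _
  refine h.congr ?_
  rw [Filter.EventuallyEq, MeasureTheory.ae_dirac_eq]
  exact Filter.eventually_pure.mpr rfl

lemma integrable_mix {f : ℝ → ℝ} {ρ : Measure ℝ} (hf : Integrable f ρ)
    {c1 c2 c3 : ℝ≥0∞} (h1 : c1 ≠ ∞) (h2 : c2 ≠ ∞) (h3 : c3 ≠ ∞) (x2 x3 : ℝ) :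
    Integrable f (c1 • ρ + c2 • MeasureTheory.Measure.dirac x2 + c3 • MeasureTheory.Measure.dirac x3) :=
  ((hf.smul_measure h1).add_measure ((integrable_dirac_fn x2).smul_measure h2)).add_measure
    ((integrable_dirac_fn x3).smul_measure h3)

lemma integral_mix {f : ℝ → ℝ} {ρ : Measure ℝ} (hf : Integrable f ρ)
    {c1 c2 c3 : ℝ} (h1 : 0 ≤ c1) (h2 : 0 ≤ c2) (h3 : 0 ≤ c3) (x2 x3 : ℝ) :
    ∫ y, f y ∂(ENNReal.ofReal c1 • ρ + ENNReal.ofReal c2 • MeasureTheory.Measure.dirac x2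
        + ENNReal.ofReal c3 • MeasureTheory.Measure.dirac x3)
      = c1 * ∫ y, f y ∂ρ + c2 * f x2 + c3 * f x3 := by
  have Ia := hf.smul_measure (c := ENNReal.ofReal c1) ENNReal.ofReal_ne_top
  have Ib := (integrable_dirac_fn (f := f) x2).smul_measure (c := ENNReal.ofReal c2) ENNReal.ofReal_ne_top
  have Ic := (integrable_dirac_fn (f := f) x3).smul_measure (c := ENNReal.ofReal c3) ENNReal.ofReal_ne_top
  rw [integral_add_measure (Ia.add_measure Ib) Ic, integral_add_measure Ia Ib,
    integral_smul_measure, integral_smul_measure, integral_smul_measure,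
    integral_dirac, integral_dirac, ENNReal.toReal_ofReal h1, ENNReal.toReal_ofReal h2,
    ENNReal.toReal_ofReal h3, smul_eq_mul, smul_eq_mul, smul_eq_mul]

lemma pointwise_bound {φ : ℝ → ℝ} (hφ : ConvexOn ℝ Set.univ φ) {ρ : Measure ℝ}
    [IsProbabilityMeasure ρ] (hφρ : Integrable φ ρ) (hidρ : Integrable (fun y : ℝ => y) ρ)
    {q aa e : ℝ} (hq0 : 0 < q) (hq1 : q ≤ 1) (haa : 0 < aa) (he : e = ∫ y, y ∂ρ)
    {x : ℝ} (ht : |(x - (1 - q) * e) / q| ≤ aa) :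
    φ x ≤ (1 - q) * ∫ y, φ y ∂ρ
      + q * (((aa + (x - (1 - q) * e) / q) / (2 * aa)) * φ aa
           + ((aa - (x - (1 - q) * e) / q) / (2 * aa)) * φ (-aa)) := by
  obtain ⟨s, hs⟩ := exists_subgradient hφ x
  set t : ℝ := (x - (1 - q) * e) / q with htdef
  have hqt : q * t = x - (1 - q) * e := by
    rw [htdef]; field_simp
  obtain ⟨htl, htr⟩ := abs_le.mp ht
  -- bound on the ρ part
  have hA : φ x + s * (e - x) ≤ ∫ y, φ y ∂ρ := by
    have hint : Integrable (fun y : ℝ => φ x - s * x + s * y) ρ :=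
      (integrable_const _).add (hidρ.const_mul s)
    have hmono := integral_mono hint hφρ (fun y => by have := hs y; dsimp; linarith)
    have hval : ∫ y, (φ x - s * x + s * y) ∂ρ = φ x - s * x + s * e := by
      rw [integral_add (integrable_const _) (hidρ.const_mul s), integral_const,
        integral_const_mul, ← he, measureReal_def, measure_univ]
      simp
    rw [hval] at hmono; linarith
  -- bounds at the two atoms
  have hplus := hs aa
  have hminus := hs (-aa)
  have l1 : (0:ℝ) ≤ (aa + t) / (2 * aa) := by apply div_nonneg; linarith; linarith
  have l2 : (0:ℝ) ≤ (aa - t) / (2 * aa) := by apply div_nonneg; linarith; linarith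
  have m1 := mul_le_mul_of_nonneg_left hplus l1
  have m2 := mul_le_mul_of_nonneg_left hminus l2
  have hkey : ((aa + t) / (2 * aa)) * (φ x + s * (aa - x))
      + ((aa - t) / (2 * aa)) * (φ x + s * (-aa - x)) = φ x + s * (t - x) := by
    field_simp
    ring
  have hl : φ x + s * (t - x) ≤ ((aa + t) / (2 * aa)) * φ aa + ((aa - t) / (2 * aa)) * φ (-aa) := by
    linarith
  have e1 := mul_le_mul_of_nonneg_left hA (by linarith : (0:ℝ) ≤ 1 - q)
  have e2 := mul_le_mul_of_nonneg_left hl hq0.le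
  have expand : (1 - q) * (φ x + s * (e - x)) + q * (φ x + s * (t - x))
      = φ x + s * (q * t + (1 - q) * e - x) := by ring
  have hzero : q * t + (1 - q) * e - x = 0 := by rw [hqt]; ring
  rw [hzero, mul_zero, add_zero] at expand
  linarith

noncomputable def aSeq (q m : ℝ) (L : ℕ → ℝ) : ℕ → ℝ
  | 0 => (L 0 + |m| + 1) / q
  | n + 1 => (aSeq q m L n + L n + L (n + 1) + |m| + 1) / q

set_option maxHeartbeats 4000000 in
lemma key_construction (μ : ℕ → Measure ℝ) (hμ : ∀ n, MemM (μ n))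
    (p : ℝ) (hp : p ∈ Set.Ioc (0:ℝ) 1) (m : ℝ) :
    ∃ ν : ℕ → Measure ℝ, (∀ n, MemM (ν n)) ∧ (∀ n, meanM (ν n) = m) ∧
      (∀ j k : ℕ, j ≤ k → ConvexOrder (ν j) (ν k)) ∧
      (∀ n (A : Set ℝ), IsClosed A → ν n A ≤ μ n A + ENNReal.ofReal p) := by
  obtain ⟨hp0, hp1⟩ := hp
  haveI hprob : ∀ n, IsProbabilityMeasure (μ n) := fun n => (hμ n).1
  set q : ℝ := p / 2 with hqdef
  have hq0 : 0 < q := by simp only [hqdef]; linarith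
  have hq1 : q ≤ 1 / 2 := by simp only [hqdef]; linarith
  -- Step 1: truncation levels
  have hLex : ∀ n, ∃ L : ℝ, 0 ≤ L ∧ μ n ((Set.Icc (-L) L)ᶜ) ≤ ENNReal.ofReal (p / 4) := by
    intro n
    have hmono : Monotone (fun k : ℕ => Set.Icc (-(k:ℝ)) (k:ℝ)) := by
      intro i j hij
      exact Set.Icc_subset_Icc (by simp only [neg_le_neg_iff]; exact_mod_cast hij)
        (by exact_mod_cast hij)
    have hunion : (⋃ k : ℕ, Set.Icc (-(k:ℝ)) (k:ℝ)) = Set.univ := by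
      ext x
      simp only [Set.mem_iUnion, Set.mem_univ, iff_true, Set.mem_Icc]
      obtain ⟨k, hk⟩ := exists_nat_ge |x|
      obtain ⟨h1, h2⟩ := abs_le.mp hk
      exact ⟨k, h1, h2⟩
    have htend := MeasureTheory.tendsto_measure_iUnion_atTop (μ := μ n) hmono
    rw [hunion, measure_univ] at htend
    have hlt : (1:ℝ≥0∞) - ENNReal.ofReal (p / 4) < 1 :=
      ENNReal.sub_lt_self ENNReal.one_ne_top one_ne_zero
        (by simp only [ne_eq, ENNReal.ofReal_eq_zero, not_le]; linarith)
    obtain ⟨k, hk⟩ := (htend.eventually (lt_mem_nhds hlt)).exists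
    refine ⟨(k:ℝ), Nat.cast_nonneg k, ?_⟩
    have hc := measure_compl (μ := μ n) (measurableSet_Icc (a := -(k:ℝ)) (b := (k:ℝ)))
      (measure_ne_top _ _)
    rw [measure_univ] at hc
    rw [hc]
    refine tsub_le_iff_right.mpr ?_
    calc (1:ℝ≥0∞) ≤ (1 - ENNReal.ofReal (p / 4)) + ENNReal.ofReal (p / 4) := le_tsub_add
      _ ≤ μ n (Set.Icc (-(k:ℝ)) (k:ℝ)) + ENNReal.ofReal (p / 4) := add_le_add_left hk.le _
      _ = ENNReal.ofReal (p / 4) + μ n (Set.Icc (-(k:ℝ)) (k:ℝ)) := add_comm _ _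
  choose L hL0 hLc using hLex
  set K : ℕ → Set ℝ := fun n => Set.Icc (-(L n)) (L n) with hKdef
  set td : ℕ → ℝ≥0∞ := fun n => μ n (K n)ᶜ with htddef
  have htd_le : ∀ n, td n ≤ ENNReal.ofReal (p / 4) := fun n => hLc n
  have htd_ne : ∀ n, td n ≠ ∞ := fun n => measure_ne_top _ _
  set tilde : ℕ → Measure ℝ := fun n =>
    (μ n).restrict (K n) + td n • MeasureTheory.Measure.dirac 0 with htildedef
  haveI htilde_prob : ∀ n, IsProbabilityMeasure (tilde n) := by
    intro n
    constructor
    rw [htildedef]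
    simp only [Measure.add_apply, Measure.restrict_apply_univ, Measure.smul_apply,
      measure_univ, smul_eq_mul, mul_one, htddef, hKdef]
    rw [measure_add_measure_compl (measurableSet_Icc (a := -(L n)) (b := (L n))), measure_univ]
  have hint_tilde : ∀ n {f : ℝ → ℝ}, Continuous f → Integrable f (tilde n) := by
    intro n f hf
    have h1 : Integrable f ((μ n).restrict (K n)) :=
      (hf.continuousOn).integrableOn_compact isCompact_Icc
    exact h1.add_measure ((integrable_dirac_fn 0).smul_measure (htd_ne n))
  have hid_tilde : ∀ n, Integrable (fun y : ℝ => y) (tilde n) := fun n =>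
    hint_tilde n continuous_id
  set e : ℕ → ℝ := fun n => ∫ y, y ∂(tilde n) with hedef
  have he_bd : ∀ n, |e n| ≤ L n := by
    intro n
    have he_eq : e n = ∫ y in K n, y ∂(μ n) := by
      simp only [hedef, htildedef]
      rw [integral_add_measure ((hμ n).2.restrict)
        ((integrable_dirac_fn 0).smul_measure (htd_ne n)),
        integral_smul_measure, integral_dirac]
      simp
    rw [he_eq]
    have hae : ∀ᵐ y ∂((μ n).restrict (K n)), ‖y‖ ≤ L n := by
      refine (MeasureTheory.ae_restrict_mem measurableSet_Icc).mono ?_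
      intro y hy
      rw [Real.norm_eq_abs]
      exact abs_le.mpr ⟨hy.1, hy.2⟩
    have hb := MeasureTheory.norm_integral_le_of_norm_le_const hae (f := fun y : ℝ => y)
    rw [Real.norm_eq_abs] at hb
    refine hb.trans ?_
    have h1 : ((μ n).restrict (K n)) Set.univ ≤ 1 := by
      rw [Measure.restrict_apply_univ]
      exact prob_le_one
    have h2 : (((μ n).restrict (K n)) Set.univ).toReal ≤ 1 := by
      rw [show (1:ℝ) = (1:ℝ≥0∞).toReal by simp]
      exact ENNReal.toReal_mono ENNReal.one_ne_top h1
    rw [measureReal_def] at hb ⊢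
    nlinarith [hL0 n, ENNReal.toReal_nonneg (a := ((μ n).restrict (K n)) Set.univ)]
  set c : ℕ → ℝ := fun n => (m - (1 - q) * e n) / q with hcdef
  set a : ℕ → ℝ := aSeq q m L with hadef
  have ha0 : a 0 = (L 0 + |m| + 1) / q := by rw [hadef]; rfl
  have harec : ∀ n, a (n + 1) = (a n + L n + L (n + 1) + |m| + 1) / q := by
    intro n; rw [hadef]; rfl
  have ha_pos : ∀ n, 0 < a n := by
    intro n
    induction n with
    | zero =>
      rw [ha0]
      apply div_pos _ hq0
      have := hL0 0; have := abs_nonneg m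
      linarith
    | succ k ih =>
      rw [harec k]
      apply div_pos _ hq0
      have := hL0 k; have := hL0 (k + 1); have := abs_nonneg m
      linarith
  have hqa : ∀ n, L n + |m| + 1 ≤ q * a n := by
    intro n
    cases n with
    | zero => rw [ha0, mul_div_cancel₀ _ hq0.ne']
    | succ k =>
      rw [harec k, mul_div_cancel₀ _ hq0.ne']
      have := ha_pos k
      have := hL0 k
      linarith
  have hstep : ∀ n, a n ≤ a (n + 1) := by
    intro n
    have hr : q * a (n + 1) = a n + L n + L (n + 1) + |m| + 1 := by
      rw [harec n, mul_div_cancel₀ _ hq0.ne']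
    have h1 : q * a n ≤ a n := by nlinarith [ha_pos n]
    have h2 : q * a n ≤ q * a (n + 1) := by
      rw [hr]
      have := hL0 n; have := hL0 (n + 1); have := abs_nonneg m
      linarith
    exact le_of_mul_le_mul_left h2 hq0
  have hamono : Monotone a := monotone_nat_of_le_succ hstep
  have hMk : ∀ j k, j < k → max (L j) (a j) + L k ≤ q * a k := by
    intro j k hjk
    obtain ⟨k', rfl⟩ : ∃ k', k = k' + 1 := ⟨k - 1, by omega⟩
    have hm : max (L j) (a j) ≤ a k' + L k' := by
      rcases Nat.lt_or_ge j k' with h | h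
      · calc max (L j) (a j) ≤ a (j + 1) := by
              have hr : q * a (j + 1) = a j + L j + L (j + 1) + |m| + 1 := by
                rw [harec j, mul_div_cancel₀ _ hq0.ne']
              have hmx : q * max (L j) (a j) ≤ max (L j) (a j) := by
                have h0 : 0 ≤ max (L j) (a j) := le_trans (hL0 j) (le_max_left _ _)
                nlinarith
              have hmx2 : max (L j) (a j) ≤ a j + L j :=
                max_le (by linarith [ha_pos j]) (by linarith [hL0 j])
              have : q * max (L j) (a j) ≤ q * a (j + 1) := by
                rw [hr]; have := hL0 (j + 1); have := abs_nonneg m; linarith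
              exact le_of_mul_le_mul_left this hq0
          _ ≤ a k' := hamono (by omega)
          _ ≤ a k' + L k' := le_add_of_nonneg_right (hL0 k')
      · have hj : j = k' := by omega
        subst hj
        exact max_le (by linarith [ha_pos j]) (by linarith [hL0 j])
    have hr : q * a (k' + 1) = a k' + L k' + L (k' + 1) + |m| + 1 := by
      rw [harec k', mul_div_cancel₀ _ hq0.ne']
    have := abs_nonneg m
    linarith
  have hc_bd : ∀ n, |c n| ≤ a n := by
    intro n
    have h1 : |m - (1 - q) * e n| ≤ |m| + L n := by
      have h2 : |(1 - q) * e n| ≤ L n := by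
        rw [abs_mul]
        have h3 : |1 - q| ≤ 1 := by rw [abs_of_nonneg (by linarith)]; linarith
        nlinarith [abs_nonneg (e n), he_bd n, abs_nonneg (1 - q)]
      calc |m - (1 - q) * e n| ≤ |m| + |(1 - q) * e n| := abs_sub _ _
        _ ≤ |m| + L n := by linarith
    have hcq : c n = (m - (1 - q) * e n) / q := rfl
    rw [hcq, abs_div, abs_of_pos hq0, div_le_iff₀ hq0]
    calc |m - (1 - q) * e n| ≤ |m| + L n := h1
      _ ≤ q * a n := by linarith [hqa n]
      _ = a n * q := mul_comm _ _
  set w : ℕ → ℝ := fun n => (a n + c n) / (2 * a n) with hwdef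
  have hw0 : ∀ n, 0 ≤ w n := by
    intro n
    apply div_nonneg
    · linarith [abs_le.mp (hc_bd n)]
    · linarith [ha_pos n]
  have hw1 : ∀ n, w n ≤ 1 := by
    intro n
    rw [hwdef]
    rw [div_le_one (by linarith [ha_pos n] : (0:ℝ) < 2 * a n)]
    linarith [abs_le.mp (hc_bd n)]
  have h1q : (0:ℝ) ≤ 1 - q := by linarith
  have hc2 : ∀ n, (0:ℝ) ≤ q * (1 - w n) := fun n => mul_nonneg hq0.le (by linarith [hw1 n])
  have hc3 : ∀ n, (0:ℝ) ≤ q * w n := fun n => mul_nonneg hq0.le (hw0 n)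
  set ν : ℕ → Measure ℝ := fun n =>
    ENNReal.ofReal (1 - q) • tilde n
      + ENNReal.ofReal (q * (1 - w n)) • MeasureTheory.Measure.dirac (-(a n))
      + ENNReal.ofReal (q * w n) • MeasureTheory.Measure.dirac (a n) with hνdef
  have hν_int : ∀ n {f : ℝ → ℝ}, Continuous f → Integrable f (ν n) := by
    intro n f hf
    exact integrable_mix (hint_tilde n hf) ENNReal.ofReal_ne_top ENNReal.ofReal_ne_top
      ENNReal.ofReal_ne_top _ _
  have hν_integral : ∀ n (f : ℝ → ℝ), Integrable f (tilde n) →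
      ∫ y, f y ∂(ν n) = (1 - q) * ∫ y, f y ∂(tilde n)
        + q * (1 - w n) * f (-(a n)) + q * w n * f (a n) := by
    intro n f hf
    exact integral_mix hf h1q (hc2 n) (hc3 n) _ _
  haveI hν_prob : ∀ n, IsProbabilityMeasure (ν n) := by
    intro n
    constructor
    rw [hνdef]
    simp only [Measure.add_apply, Measure.smul_apply, measure_univ, smul_eq_mul, mul_one]
    rw [← ENNReal.ofReal_add h1q (hc2 n), ← ENNReal.ofReal_add (by linarith [hc2 n, h1q]) (hc3 n)]
    rw [show (1 - q) + q * (1 - w n) + q * w n = 1 by ring, ENNReal.ofReal_one]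
  have hν_id : ∀ n, Integrable (fun y : ℝ => y) (ν n) := fun n => hν_int n continuous_id
  have hν_mean : ∀ n, ∫ y, y ∂(ν n) = m := by
    intro n
    rw [hν_integral n _ (hid_tilde n)]
    have hqc : q * c n = m - (1 - q) * e n := by
      rw [hcdef]; field_simp
    have han := ha_pos n
    have hwn : w n = (a n + c n) / (2 * a n) := rfl
    have h2w : q * (1 - w n) * (-(a n)) + q * w n * (a n) = q * c n := by
      rw [hwn]
      have hane : a n ≠ 0 := han.ne'
      field_simp
      ring
    have he_n : e n = ∫ y, y ∂(tilde n) := rfl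
    rw [← he_n]
    linarith [hqc, h2w]
  have hsupp : ∀ n, ∀ᵐ x ∂(ν n), |x| ≤ max (L n) (a n) := by
    intro n
    rw [MeasureTheory.ae_iff]
    have hBsub : {x : ℝ | ¬ |x| ≤ max (L n) (a n)} ⊆ {x : ℝ | max (L n) (a n) < |x|} :=
      fun x hx => not_le.mp hx
    refine measure_mono_null hBsub ?_
    have hBm : MeasurableSet {x : ℝ | max (L n) (a n) < |x|} :=
      (isOpen_lt continuous_const continuous_abs).measurableSet
    have hMn0 : 0 ≤ max (L n) (a n) := le_trans (hL0 n) (le_max_left _ _)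
    have h0 : (0:ℝ) ∉ {x : ℝ | max (L n) (a n) < |x|} := by
      simp only [Set.mem_setOf_eq, abs_zero, not_lt]
      exact hMn0
    have hpa : (a n) ∉ {x : ℝ | max (L n) (a n) < |x|} := by
      simp only [Set.mem_setOf_eq, not_lt, abs_of_pos (ha_pos n)]
      exact le_max_right _ _
    have hma : -(a n) ∉ {x : ℝ | max (L n) (a n) < |x|} := by
      simp only [Set.mem_setOf_eq, not_lt, abs_neg, abs_of_pos (ha_pos n)]
      exact le_max_right _ _
    have ht1 : tilde n {x : ℝ | max (L n) (a n) < |x|} = 0 := by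
      rw [htildedef]
      simp only [Measure.add_apply, Measure.smul_apply, smul_eq_mul]
      rw [Measure.restrict_apply hBm]
      have hempty : {x : ℝ | max (L n) (a n) < |x|} ∩ K n = ∅ := by
        rw [Set.eq_empty_iff_forall_notMem]
        rintro x ⟨hx, hxK⟩
        simp only [hKdef, Set.mem_Icc] at hxK
        have h1 : |x| ≤ L n := abs_le.mpr hxK
        have h2 : |x| ≤ max (L n) (a n) := h1.trans (le_max_left _ _)
        simp only [Set.mem_setOf_eq] at hx
        linarith
      rw [hempty, measure_empty, MeasureTheory.Measure.dirac_apply' 0 hBm,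
        Set.indicator_of_notMem h0]
      simp
    rw [hνdef]
    simp only [Measure.add_apply, Measure.smul_apply, smul_eq_mul]
    rw [ht1, MeasureTheory.Measure.dirac_apply' _ hBm, MeasureTheory.Measure.dirac_apply' _ hBm,
      Set.indicator_of_notMem hma, Set.indicator_of_notMem hpa]
    simp
  have hbound : ∀ n (A : Set ℝ), IsClosed A → ν n A ≤ μ n A + ENNReal.ofReal p := by
    intro n A hA
    have hAm := hA.measurableSet
    have htn : tilde n A ≤ μ n A + ENNReal.ofReal (p / 4) := by
      rw [htildedef]
      simp only [Measure.add_apply, Measure.smul_apply, smul_eq_mul]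
      rw [Measure.restrict_apply hAm]
      calc μ n (A ∩ K n) + td n * MeasureTheory.Measure.dirac 0 A
          ≤ μ n A + ENNReal.ofReal (p / 4) * 1 :=
            add_le_add (measure_mono Set.inter_subset_left)
              (mul_le_mul' (htd_le n) prob_le_one)
        _ = μ n A + ENNReal.ofReal (p / 4) := by rw [mul_one]
    have hofr1 : ENNReal.ofReal (1 - q) ≤ 1 := ENNReal.ofReal_le_one.mpr (by linarith)
    rw [hνdef]
    simp only [Measure.add_apply, Measure.smul_apply, smul_eq_mul]
    calc ENNReal.ofReal (1 - q) * tilde n A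
          + ENNReal.ofReal (q * (1 - w n)) * MeasureTheory.Measure.dirac (-(a n)) A
          + ENNReal.ofReal (q * w n) * MeasureTheory.Measure.dirac (a n) A
        ≤ 1 * (μ n A + ENNReal.ofReal (p / 4)) + ENNReal.ofReal (q * (1 - w n)) * 1
          + ENNReal.ofReal (q * w n) * 1 :=
          add_le_add (add_le_add (mul_le_mul' hofr1 htn) (mul_le_mul' le_rfl prob_le_one))
            (mul_le_mul' le_rfl prob_le_one)
      _ = μ n A + (ENNReal.ofReal (p / 4) + ENNReal.ofReal (q * (1 - w n))
            + ENNReal.ofReal (q * w n)) := by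
          rw [one_mul, mul_one, mul_one, add_assoc, add_assoc, add_assoc]
      _ ≤ μ n A + ENNReal.ofReal p := by
          refine add_le_add_right ?_ _
          rw [← ENNReal.ofReal_add (by linarith) (hc2 n),
            ← ENNReal.ofReal_add (by linarith [hc2 n]) (hc3 n)]
          refine ENNReal.ofReal_le_ofReal ?_
          have : p / 4 + q * (1 - w n) + q * w n = p / 4 + q := by ring
          rw [this, hqdef]
          linarith
  have horder : ∀ j k, j ≤ k → ConvexOrder (ν j) (ν k) := by
    intro j k hjk
    rcases eq_or_lt_of_le hjk with rfl | hlt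
    · intro φ hφ h1 h2; exact le_rfl
    intro φ hφ hφj hφk
    have hφc : Continuous φ := convex_continuous hφ
    have hφtk : Integrable φ (tilde k) := hint_tilde k hφc
    have haak : 0 < a k := ha_pos k
    set A : ℝ := ∫ y, φ y ∂(tilde k) with hAdef
    set G : ℝ → ℝ := fun x => (1 - q) * A
      + q * (((a k + (x - (1 - q) * e k) / q) / (2 * a k)) * φ (a k)
           + ((a k - (x - (1 - q) * e k) / q) / (2 * a k)) * φ (-(a k))) with hGdef
    set C1 : ℝ := (φ (a k) - φ (-(a k))) / (2 * a k) with hC1def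
    set C0 : ℝ := (1 - q) * A + q * (φ (a k) + φ (-(a k))) / 2 - (1 - q) * (e k) * C1
      with hC0def
    have hGaff : ∀ x, G x = C1 * x + C0 := by
      intro x
      simp only [hGdef, hC0def, hC1def]
      field_simp
      ring
    have hptw : ∀ x : ℝ, |x| ≤ max (L j) (a j) → φ x ≤ G x := by
      intro x hx
      have hTk : |(x - (1 - q) * e k) / q| ≤ a k := by
        rw [abs_div, abs_of_pos hq0, div_le_iff₀ hq0]
        have h2 : |(1 - q) * e k| ≤ L k := by
          rw [abs_mul, abs_of_nonneg h1q]
          nlinarith [he_bd k, abs_nonneg (e k)]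
        have h1 : |x - (1 - q) * e k| ≤ max (L j) (a j) + L k := by
          calc |x - (1 - q) * e k| ≤ |x| + |(1 - q) * e k| := abs_sub _ _
            _ ≤ max (L j) (a j) + L k := add_le_add hx h2
        calc |x - (1 - q) * e k| ≤ max (L j) (a j) + L k := h1
          _ ≤ q * a k := hMk j k hlt
          _ = a k * q := mul_comm _ _
      exact pointwise_bound hφ hφtk (hid_tilde k) hq0 (by linarith) haak rfl hTk
    have hae : ∀ᵐ x ∂(ν j), φ x ≤ G x := (hsupp j).mono fun x hx => hptw x hx
    have hGfun : G = fun x => C1 * x + C0 := funext hGaff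
    have hGint : Integrable G (ν j) := by
      rw [hGfun]
      exact ((hν_id j).const_mul _).add (integrable_const _)
    have h1 : ∫ y, φ y ∂(ν j) ≤ ∫ y, G y ∂(ν j) := integral_mono_ae hφj hGint hae
    have h2 : ∫ y, G y ∂(ν j) = C1 * m + C0 := by
      rw [hGfun]
      rw [integral_add ((hν_id j).const_mul _) (integrable_const _), integral_const_mul,
        hν_mean j, integral_const, measureReal_def, measure_univ]
      simp
    have h4 : G m = ∫ y, φ y ∂(ν k) := by
      rw [hν_integral k φ hφtk]
      simp only [hGdef]
      have hck : (m - (1 - q) * e k) / q = c k := rfl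
      rw [hck]
      have hwk : w k = (a k + c k) / (2 * a k) := rfl
      have h5 : (a k - c k) / (2 * a k) = 1 - w k := by
        rw [hwk]
        field_simp
        ring
      rw [h5, ← hwk]
      ring
    calc ∫ y, φ y ∂(ν j) ≤ ∫ y, G y ∂(ν j) := h1
      _ = C1 * m + C0 := h2
      _ = G m := (hGaff m).symm
      _ = ∫ y, φ y ∂(ν k) := h4
  exact ⟨ν, fun n => ⟨hν_prob n, hν_id n⟩, fun n => hν_mean n, horder, hbound⟩

/-- for any sequence in `M`, any `ε > 0`, `p ∈ (0,1]` and any mean `m`,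
there is a peacock with mean `m` within modified Prokhorov distance
`d_p^P ≤ ε`; in particular (taking `p = ε ∈ (0,1]`), within Prokhorov distance
`d^P ≤ ε`. -/
theorem peacock_within_prokhorov (μ : ℕ → Measure ℝ) (hμ : ∀ n, MemM (μ n))
    (ε p : ℝ) (hε : 0 < ε) (hp : p ∈ Set.Ioc (0:ℝ) 1) (m : ℝ) :
    (∃ ν : ℕ → Measure ℝ, (∀ n, MemM (ν n)) ∧ (∀ n, meanM (ν n) = m) ∧
        (∀ j k : ℕ, j ≤ k → ConvexOrder (ν j) (ν k)) ∧
        (∀ n, dProkMod p (μ n) (ν n) ≤ ENNReal.ofReal ε)) ∧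
    (ε ≤ 1 → ∃ ν : ℕ → Measure ℝ, (∀ n, MemM (ν n)) ∧ (∀ n, meanM (ν n) = m) ∧
        (∀ j k : ℕ, j ≤ k → ConvexOrder (ν j) (ν k)) ∧
        (∀ n, dProk (μ n) (ν n) ≤ ENNReal.ofReal ε)) := by
  constructor
  · obtain ⟨ν, h1, h2, h3, h4⟩ := key_construction μ hμ p hp m
    refine ⟨ν, h1, h2, h3, fun n => ?_⟩
    refine sInf_le ⟨ε, ⟨hε, fun A hA => ?_⟩, rfl⟩
    exact (h4 n A hA).trans
      (add_le_add_left (measure_mono (Metric.self_subset_cthickening A)) _)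
  · intro hε1
    obtain ⟨ν, h1, h2, h3, h4⟩ := key_construction μ hμ ε ⟨hε, hε1⟩ m
    refine ⟨ν, h1, h2, h3, fun n => ?_⟩
    refine sInf_le ⟨ε, ⟨hε, fun A hA => ?_⟩, rfl⟩
    exact (h4 n A hA).trans
      (add_le_add_left (measure_mono (Metric.self_subset_cthickening A)) _)
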